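/- Let T be the triangle with vertices O(0,0), A(1,0), B(1,1). For 0 < α < 1, cut T by the line through C(1−α, 0) and D(1, α) (the line x₂ = x₁ − 1 + α), producing the small isosceles triangle ACD with centroid P = ((3−α)/3, α/3) and the trapezoid OCDB with centroid Q = ((−α² + 2α + 2)/(3α+3), (α² + α + 1)/(3α+3)). Then the line CD is the perpendicular bisector of segment PQ if and only if α = (√5 − 1)/2, the reciprocal of the Golden ratio. -/
import Mathlib


/-- For the triangle O(0,0), A(1,0), B(1,1) cut by the line CD : x₂ = x₁ − 1 + α,
the line CD is the perpendicular bisector of the segment joining the centroid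
P = ((3−α)/3, α/3) of the small triangle and the centroid
Q = ((−α²+2α+2)/(3α+3), (α²+α+1)/(3α+3)) of the trapezoid if and only if
α = (√5 − 1)/2, the reciprocal of the Golden ratio. -/
theorem golden_ratio_cvt (α : ℝ) (h0 : 0 < α) (h1 : α < 1)
    (P Q : ℝ × ℝ)
    (hP : P = ((3 - α) / 3, α / 3))
    (hQ : Q = ((-α ^ 2 + 2 * α + 2) / (3 * α + 3), (α ^ 2 + α + 1) / (3 * α + 3))) :
    (((P.2 + Q.2) / 2 = (P.1 + Q.1) / 2 - 1 + α) ∧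
        ((Q.1 - P.1) * 1 + (Q.2 - P.2) * 1 = 0)) ↔
      α = (Real.sqrt 5 - 1) / 2 := by
  subst hP hQ
  have hden : (3 * α + 3) ≠ 0 := by nlinarith
  have hs : Real.sqrt 5 ^ 2 = 5 := Real.sq_sqrt (by norm_num)
  have hs1 : (1:ℝ) < Real.sqrt 5 := by nlinarith [Real.sqrt_nonneg 5]
  have hiff : ((α/3 + (α ^ 2 + α + 1) / (3 * α + 3)) / 2
      = (((3 - α)/3) + (-α ^ 2 + 2 * α + 2) / (3 * α + 3)) / 2 - 1 + α)
      ↔ α ^ 2 + α - 1 = 0 := by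
    field_simp
    ring_nf
    constructor <;> intro h <;> linarith
  constructor
  · rintro ⟨h1', -⟩
    have key : α ^ 2 + α - 1 = 0 := hiff.mp h1'
    have : (α - (Real.sqrt 5 - 1) / 2) * (α + (Real.sqrt 5 + 1) / 2) = 0 := by
      nlinarith [key, hs]
    rcases mul_eq_zero.mp this with h | h
    · linarith
    · nlinarith
  · intro hα
    have key : α ^ 2 + α - 1 = 0 := by rw [hα]; linear_combination hs / 4
    refine ⟨hiff.mpr key, ?_⟩
    field_simp
    ring
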